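/- arXiv:1408.6645 — 3 statements merged into one kernel-verified Lean document; each statement's English description precedes it below -/
import Mathlib

section
/- Let μ and ν be Radon measures on ℝⁿ whose restrictions to the open unit ball 𝔹 = B(0,1) are probability measures, and let W₁(μ,ν) = sup_ψ |∫ψ dμ − ∫ψ dν| where the supremum is over 1-Lipschitz functions ψ : ℝⁿ → ℝ supported on 𝔹. Let φ : closure(𝔹) → [0,1] be L-Lipschitz with φ = 1 on the boundary ∂𝔹. Define F(t) = μ(φ⁻¹([0,t))) and G(t) = ν(φ⁻¹([0,t))) for t ∈ [0,1]. Then ∫₀¹ |F(t) − G(t)| dt ≤ L · W₁(μ,ν). -/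
open MeasureTheory Metric Set
open scoped ENNReal NNReal

/-- The restricted `L¹`-Wasserstein distance: the supremum of `|∫ψ dμ − ∫ψ dν|` over
`1`-Lipschitz functions `ψ` supported in the open unit ball. -/
noncomputable def W1 {n : ℕ} (μ ν : Measure (EuclideanSpace ℝ (Fin n))) : ℝ :=
  sSup {a : ℝ | ∃ ψ : EuclideanSpace ℝ (Fin n) → ℝ,
    LipschitzWith 1 ψ ∧ (∀ x ∉ ball (0 : EuclideanSpace ℝ (Fin n)) 1, ψ x = 0) ∧
    a = |(∫ x, ψ x ∂μ) - ∫ x, ψ x ∂ν|}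

lemma integral_eq_ball_integral {n : ℕ} (μ : Measure (EuclideanSpace ℝ (Fin n)))
    (ψ : EuclideanSpace ℝ (Fin n) → ℝ)
    (h0 : ∀ x ∉ ball (0 : EuclideanSpace ℝ (Fin n)) 1, ψ x = 0) :
    ∫ x, ψ x ∂μ = ∫ x in ball 0 1, ψ x ∂μ :=
  (setIntegral_eq_integral_of_forall_compl_eq_zero h0).symm

lemma W1_bddAbove {n : ℕ} (μ ν : Measure (EuclideanSpace ℝ (Fin n)))
    (hμ : IsProbabilityMeasure (μ.restrict (ball 0 1)))
    (hν : IsProbabilityMeasure (ν.restrict (ball 0 1))) :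
    BddAbove {a : ℝ | ∃ ψ : EuclideanSpace ℝ (Fin n) → ℝ,
      LipschitzWith 1 ψ ∧ (∀ x ∉ ball (0 : EuclideanSpace ℝ (Fin n)) 1, ψ x = 0) ∧
      a = |(∫ x, ψ x ∂μ) - ∫ x, ψ x ∂ν|} := by
  refine ⟨2, fun a ha => ?_⟩
  obtain ⟨ψ, hψ, h0, rfl⟩ := ha
  have key : ∀ (m : Measure (EuclideanSpace ℝ (Fin n))),
      IsProbabilityMeasure (m.restrict (ball 0 1)) →
      ∃ b : ℝ, (∫ x, ψ x ∂m) = b + ψ 0 ∧ |b| ≤ 1 := by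
    intro m hm
    set m' := m.restrict (ball 0 1) with hm'
    have hb : ∀ᵐ x ∂m', ‖ψ x - ψ 0‖ ≤ 1 := by
      filter_upwards [ae_restrict_mem measurableSet_ball] with x hx
      have h1 := hψ.dist_le_mul x 0
      rw [Real.dist_eq] at h1
      have h2 : dist x 0 ≤ 1 := le_of_lt (by simpa [mem_ball] using hx)
      simp only [Real.norm_eq_abs]
      calc |ψ x - ψ 0| ≤ 1 * dist x 0 := h1
        _ ≤ 1 := by linarith
    have hint : Integrable (fun x => ψ x - ψ 0) m' :=
      ⟨((hψ.continuous.sub continuous_const)).aestronglyMeasurable,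
        HasFiniteIntegral.of_bounded hb⟩
    refine ⟨∫ x, (ψ x - ψ 0) ∂m', ?_, ?_⟩
    · rw [integral_eq_ball_integral m ψ h0]
      have : ∫ x, ψ x ∂m' = ∫ x, ((ψ x - ψ 0) + ψ 0) ∂m' := by simp
      rw [this, integral_add hint (integrable_const _), integral_const]
      simp [hm.measure_univ]
    · calc |∫ x, (ψ x - ψ 0) ∂m'| ≤ 1 * (m' univ).toReal :=
            norm_integral_le_of_norm_le_const hb
        _ = 1 := by simp [hm.measure_univ]
  obtain ⟨b1, hb1, hb1'⟩ := key μ hμ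
  obtain ⟨b2, hb2, hb2'⟩ := key ν hν
  rw [hb1, hb2]
  have : b1 + ψ 0 - (b2 + ψ 0) = b1 - b2 := by ring
  rw [this]
  calc |b1 - b2| ≤ |b1| + |b2| := abs_sub _ _
    _ ≤ 2 := by linarith

/-- If `μ, ν` restrict to probability measures on the unit ball, `φ` is `L`-Lipschitz on the
closed unit ball, takes values in `[0,1]` there and equals `1` on the unit sphere, and
`F(t) = μ(φ⁻¹([0,t)))`, `G(t) = ν(φ⁻¹([0,t)))`, then `∫₀¹ |F − G| ≤ L · W₁(μ,ν)`. -/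
theorem stmt_1 {n : ℕ} (μ ν : Measure (EuclideanSpace ℝ (Fin n)))
    [IsLocallyFiniteMeasure μ] [IsLocallyFiniteMeasure ν]
    (hμ : IsProbabilityMeasure (μ.restrict (ball 0 1)))
    (hν : IsProbabilityMeasure (ν.restrict (ball 0 1)))
    (L : ℝ≥0) (φ : EuclideanSpace ℝ (Fin n) → ℝ)
    (hLip : LipschitzOnWith L φ (closedBall 0 1))
    (hrange : ∀ x ∈ closedBall (0 : EuclideanSpace ℝ (Fin n)) 1, φ x ∈ Icc (0 : ℝ) 1)
    (hbdry : ∀ x ∈ sphere (0 : EuclideanSpace ℝ (Fin n)) 1, φ x = 1)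
    (F G : ℝ → ℝ)
    (hF : ∀ t, F t = (μ (ball 0 1 ∩ {x | φ x < t})).toReal)
    (hG : ∀ t, G t = (ν (ball 0 1 ∩ {x | φ x < t})).toReal) :
    ∫ t in (0 : ℝ)..1, |F t - G t| ≤ (L : ℝ) * W1 μ ν := by
  classical
  have hμball : μ (ball 0 1) = 1 := by
    have := hμ.measure_univ; rwa [Measure.restrict_apply_univ] at this
  have hνball : ν (ball 0 1) = 1 := by
    have := hν.measure_univ; rwa [Measure.restrict_apply_univ] at this
  have hW1bdd := W1_bddAbove μ ν hμ hν
  have hW1nonneg : 0 ≤ W1 μ ν := by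
    refine le_csSup hW1bdd ?_
    exact ⟨fun _ => 0, (LipschitzWith.const 0).weaken zero_le, fun _ _ => rfl, by simp⟩
  -- special case n = 0
  rcases Nat.eq_zero_or_pos n with hn | hn
  · subst hn
    have hx0 : ∀ x : EuclideanSpace ℝ (Fin 0), x = 0 := fun x => by ext i; exact i.elim0
    have hFG : ∀ t, F t = G t := by
      intro t
      rw [hF, hG]
      rcases lt_or_ge (φ 0) t with h | h
      · have hset : ball (0 : EuclideanSpace ℝ (Fin 0)) 1 ∩ {x | φ x < t} = ball 0 1 := by
          ext x; simp [hx0 x, h]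
        rw [hset, hμball, hνball]
      · have hset : ball (0 : EuclideanSpace ℝ (Fin 0)) 1 ∩ {x | φ x < t}
            = (∅ : Set (EuclideanSpace ℝ (Fin 0))) := by
          ext x; simp [hx0 x, not_lt.2 h]
        rw [hset]; simp
    have hzero : ∫ t in (0:ℝ)..1, |F t - G t| = 0 := by
      rw [intervalIntegral.integral_congr (g := fun _ => (0:ℝ))
        (fun t _ => by rw [hFG t, sub_self, abs_zero])]
      simp
    rw [hzero]
    exact mul_nonneg L.coe_nonneg hW1nonneg
  -- main case n ≥ 1
  -- monotone distribution functions
  have hFmono : Monotone F := by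
    intro a b hab
    rw [hF, hF]
    refine ENNReal.toReal_mono ?_ (measure_mono (inter_subset_inter_right _ ?_))
    · exact ne_top_of_le_ne_top (by rw [hμball]; exact ENNReal.one_ne_top)
        (measure_mono inter_subset_left)
    · exact fun x hx => lt_of_lt_of_le hx hab
  have hGmono : Monotone G := by
    intro a b hab
    rw [hG, hG]
    refine ENNReal.toReal_mono ?_ (measure_mono (inter_subset_inter_right _ ?_))
    · exact ne_top_of_le_ne_top (by rw [hνball]; exact ENNReal.one_ne_top)
        (measure_mono inter_subset_left)
    · exact fun x hx => lt_of_lt_of_le hx hab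
  have hFmeas : Measurable F := hFmono.measurable
  have hGmeas : Measurable G := hGmono.measurable
  -- the sign function
  set s : ℝ → ℝ :=
    Set.indicator (Ioc (0:ℝ) 1) (fun t => if G t ≤ F t then (1:ℝ) else -1) with hs_def
  have hs_meas : Measurable s := by
    refine Measurable.indicator ?_ measurableSet_Ioc
    exact Measurable.ite (measurableSet_le hGmeas hFmeas) measurable_const measurable_const
  have hs_bd : ∀ t, |s t| ≤ 1 := by
    intro t
    rw [hs_def]
    by_cases ht : t ∈ Ioc (0:ℝ) 1
    · rw [Set.indicator_of_mem ht]
      split <;> simp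
    · rw [Set.indicator_of_notMem ht]; simp
  have hs_int : ∀ a b : ℝ, IntervalIntegrable s volume a b := by
    intro a b
    constructor <;>
    · refine ⟨hs_meas.aestronglyMeasurable, HasFiniteIntegral.of_bounded (C := 1) ?_⟩
      exact ae_of_all _ fun t => by simpa [Real.norm_eq_abs] using hs_bd t
  -- the antiderivative
  set S : ℝ → ℝ := fun u => ∫ t in u..1, s t with hS_def
  have hS_lip : LipschitzWith 1 S := by
    refine LipschitzWith.of_dist_le_mul fun u v => ?_
    have hsub : S u - S v = ∫ t in u..v, s t := by
      rw [hS_def]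
      have := intervalIntegral.integral_add_adjacent_intervals
        (hs_int u v) (hs_int v 1)
      simp only []
      linarith [this]
    rw [Real.dist_eq, Real.dist_eq, NNReal.coe_one, one_mul, hsub]
    calc |∫ t in u..v, s t| = ‖∫ t in u..v, s t‖ := (Real.norm_eq_abs _).symm
      _ ≤ 1 * |v - u| := intervalIntegral.norm_integral_le_of_norm_le_const
          (fun t _ => by simpa [Real.norm_eq_abs] using hs_bd t)
      _ = |u - v| := by rw [one_mul, abs_sub_comm]
  have hS_one : ∀ u : ℝ, 1 ≤ u → S u = 0 := by
    intro u hu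
    rw [hS_def]
    simp only []
    rw [intervalIntegral.integral_of_ge hu]
    rw [setIntegral_eq_zero_of_forall_eq_zero, neg_zero]
    intro t ht
    rw [hs_def]
    exact Set.indicator_of_notMem (fun h => absurd h.2 (not_le.2 ht.1)) _
  -- extend φ
  obtain ⟨g, hg, hgφ⟩ := hLip.extend_real
  have hgmeas : Measurable g := hg.continuous.measurable
  -- the lower bound on φ near the boundary
  have hAin : ∀ x ∈ closedBall (0 : EuclideanSpace ℝ (Fin n)) 1, 1 + (L:ℝ)*(‖x‖-1) ≤ φ x := by
    intro x hx
    have hxnorm : ‖x‖ ≤ 1 := by simpa [mem_closedBall, dist_zero_right] using hx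
    obtain ⟨y, hy, hyd⟩ : ∃ y : EuclideanSpace ℝ (Fin n), ‖y‖ = 1 ∧ dist x y ≤ 1 - ‖x‖ := by
      by_cases hx0 : x = 0
      · refine ⟨EuclideanSpace.single (⟨0, hn⟩ : Fin n) (1:ℝ), ?_, ?_⟩
        · rw [EuclideanSpace.norm_single]; simp
        · rw [hx0]
          simp [dist_eq_norm, EuclideanSpace.norm_single]
      · refine ⟨‖x‖⁻¹ • x, ?_, ?_⟩
        · rw [norm_smul, norm_inv, norm_norm, inv_mul_cancel₀ (norm_ne_zero_iff.2 hx0)]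
        · have hxpos : (0:ℝ) < ‖x‖ := norm_pos_iff.2 hx0
          have : x - ‖x‖⁻¹ • x = (1 - ‖x‖⁻¹) • x := by
            rw [sub_smul, one_smul]
          rw [dist_eq_norm, this, norm_smul, Real.norm_eq_abs]
          have : |1 - ‖x‖⁻¹| * ‖x‖ = |‖x‖ - 1| := by
            rw [← abs_of_pos hxpos, ← abs_mul]
            congr 1
            field_simp
            rw [abs_of_pos hxpos]; ring
          rw [this, abs_of_nonpos (by linarith)]
          linarith
    have hyφ : φ y = 1 := hbdry y (by simpa [mem_sphere, dist_zero_right] using hy)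
    have hyball : y ∈ closedBall (0 : EuclideanSpace ℝ (Fin n)) 1 := by
      simp [mem_closedBall, dist_zero_right, hy]
    have hd := (lipschitzOnWith_iff_dist_le_mul.1 hLip) x hx y hyball
    rw [Real.dist_eq, hyφ] at hd
    have h1 : |φ x - 1| ≤ (L:ℝ) * (1 - ‖x‖) :=
      le_trans hd (mul_le_mul_of_nonneg_left hyd L.coe_nonneg)
    have := abs_le.1 h1
    nlinarith [this.1]
  -- the modified function h and ψ
  set h : EuclideanSpace ℝ (Fin n) → ℝ :=
    fun x => max (g x) (1 + (L:ℝ)*(‖x‖-1)) with hh_def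
  have hlin : LipschitzWith L (fun x : EuclideanSpace ℝ (Fin n) => 1 + (L:ℝ)*(‖x‖-1)) := by
    refine LipschitzWith.of_dist_le_mul fun x y => ?_
    rw [Real.dist_eq]
    have he : (1 + (L:ℝ)*(‖x‖-1)) - (1+(L:ℝ)*(‖y‖-1)) = (L:ℝ)*(‖x‖-‖y‖) := by ring
    rw [he, abs_mul, abs_of_nonneg L.coe_nonneg, dist_eq_norm]
    exact mul_le_mul_of_nonneg_left (abs_norm_sub_norm_le x y) L.coe_nonneg
  have hh_lip : LipschitzWith L h := by
    have := hg.max hlin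
    rwa [max_self] at this
  have hhφ : ∀ x ∈ ball (0 : EuclideanSpace ℝ (Fin n)) 1, h x = φ x := by
    intro x hx
    have hx' := ball_subset_closedBall hx
    rw [hh_def]
    simp only []
    rw [← hgφ hx']
    exact max_eq_left (hAin x hx')
  set ψ : EuclideanSpace ℝ (Fin n) → ℝ := fun x => S (h x) with hψ_def
  have hψ_lip : LipschitzWith L ψ := by
    have := hS_lip.comp hh_lip
    rwa [one_mul] at this
  have hψ0 : ∀ x ∉ ball (0 : EuclideanSpace ℝ (Fin n)) 1, ψ x = 0 := by
    intro x hx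
    have hxnorm : (1:ℝ) ≤ ‖x‖ := by
      simpa [mem_ball, dist_zero_right, not_lt] using hx
    refine hS_one _ ?_
    calc (1:ℝ) ≤ 1 + (L:ℝ)*(‖x‖-1) := by nlinarith [L.coe_nonneg]
      _ ≤ h x := le_max_right _ _
  -- the key layer-cake/Fubini identity
  have key : ∀ (m : Measure (EuclideanSpace ℝ (Fin n))) (H : ℝ → ℝ), m (ball 0 1) = 1 →
      (∀ t, H t = (m (ball 0 1 ∩ {x | φ x < t})).toReal) →
      ∫ t in Ioc (0:ℝ) 1, s t * H t = ∫ x, ψ x ∂m := by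
    intro m H hm hH
    set m' := m.restrict (ball 0 1) with hm'
    haveI : IsProbabilityMeasure m' := ⟨by rw [hm', Measure.restrict_apply_univ, hm]⟩
    have hHt : ∀ t, H t = (m' {x | g x < t}).toReal := by
      intro t
      have hset : {x : EuclideanSpace ℝ (Fin n) | g x < t} ∩ ball 0 1
          = ball 0 1 ∩ {x | φ x < t} := by
        ext x
        constructor
        · rintro ⟨h1, h2⟩
          refine ⟨h2, ?_⟩
          show φ x < t
          rw [hgφ (ball_subset_closedBall h2)]
          exact h1
        · rintro ⟨h1, h2⟩
          refine ⟨?_, h1⟩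
          show g x < t
          rw [← hgφ (ball_subset_closedBall h1)]
          exact h2
      rw [hH, hm', Measure.restrict_apply (measurableSet_lt hgmeas measurable_const), hset]
    set f : ℝ → EuclideanSpace ℝ (Fin n) → ℝ :=
      fun t x => s t * (Ioi (g x)).indicator (fun _ => (1:ℝ)) t with hf_def
    have hsetm : MeasurableSet {p : ℝ × EuclideanSpace ℝ (Fin n) | g p.2 < p.1} :=
      measurableSet_lt (hgmeas.comp measurable_snd) measurable_fst
    have hf_unc : Function.uncurry f = fun p : ℝ × EuclideanSpace ℝ (Fin n) =>
        s p.1 * ({p : ℝ × EuclideanSpace ℝ (Fin n) | g p.2 < p.1}).indicator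
          (fun _ => (1:ℝ)) p := by
      funext p
      rcases p with ⟨t, x⟩
      simp [hf_def, Function.uncurry, Set.indicator_apply, mem_Ioi, mem_setOf_eq]
    have hf_meas : Measurable (Function.uncurry f) := by
      rw [hf_unc]
      exact (hs_meas.comp measurable_fst).mul (measurable_const.indicator hsetm)
    have hf_int : Integrable (Function.uncurry f)
        ((volume.restrict (Ioc (0:ℝ) 1)).prod m') := by
      refine ⟨hf_meas.aestronglyMeasurable,
        HasFiniteIntegral.of_bounded (C := 1) (ae_of_all _ fun p => ?_)⟩
      rw [hf_unc]
      simp only [Real.norm_eq_abs, abs_mul]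
      have h1 : |({p : ℝ × EuclideanSpace ℝ (Fin n) | g p.2 < p.1}).indicator
          (fun _ => (1:ℝ)) p| ≤ 1 := by
        rw [Set.indicator_apply]; split <;> simp
      calc |s p.1| * _ ≤ 1 * 1 := mul_le_mul (hs_bd p.1) h1 (abs_nonneg _) zero_le_one
        _ = 1 := one_mul 1
    have hleft : ∀ t : ℝ, s t * H t = ∫ x, f t x ∂m' := by
      intro t
      have hind : ∀ x : EuclideanSpace ℝ (Fin n), (Ioi (g x)).indicator (fun _ => (1:ℝ)) t
          = ({x : EuclideanSpace ℝ (Fin n) | g x < t}).indicator (fun _ => (1:ℝ)) x := by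
        intro x
        by_cases hc : g x < t <;>
          simp [Set.indicator_apply, mem_Ioi, mem_setOf_eq, hc]
      calc s t * H t = s t * (m' {x | g x < t}).toReal := by rw [hHt]
        _ = s t * ∫ x, ({x : EuclideanSpace ℝ (Fin n) | g x < t}).indicator
              (fun _ => (1:ℝ)) x ∂m' := by
            rw [integral_indicator_const (1:ℝ) (measurableSet_lt hgmeas measurable_const)]
            simp [measureReal_def]
        _ = ∫ x, f t x ∂m' := by
            rw [← integral_const_mul]
            refine integral_congr_ae (ae_of_all _ fun x => ?_)
            simp only [hf_def]
            rw [hind x]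
      -- done
    have hinner : ∀ x ∈ ball (0 : EuclideanSpace ℝ (Fin n)) 1,
        ∫ t in Ioc (0:ℝ) 1, f t x = ψ x := by
      intro x hx
      have hx' := ball_subset_closedBall hx
      have hgx : g x = φ x := (hgφ hx').symm
      have hφx := hrange x hx'
      have h1 : ∀ t, f t x = (Ioi (g x)).indicator s t := by
        intro t
        by_cases hc : t ∈ Ioi (g x)
        · simp [hf_def, Set.indicator_of_mem hc]
        · simp [hf_def, Set.indicator_of_notMem hc]
      simp only [h1]
      rw [setIntegral_indicator measurableSet_Ioi]
      rw [Set.Ioc_inter_Ioi, sup_eq_right.2 (by rw [hgx]; exact hφx.1)]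
      rw [← intervalIntegral.integral_of_le (by rw [hgx]; exact hφx.2)]
      rw [hψ_def]
      simp only []
      rw [hhφ x hx, hS_def, ← hgx]
    calc ∫ t in Ioc (0:ℝ) 1, s t * H t
        = ∫ t in Ioc (0:ℝ) 1, ∫ x, f t x ∂m' := by
          refine setIntegral_congr_fun measurableSet_Ioc ?_
          intro t _
          exact hleft t
      _ = ∫ x, (∫ t in Ioc (0:ℝ) 1, f t x) ∂m' := integral_integral_swap hf_int
      _ = ∫ x, ψ x ∂m' := integral_congr_ae (by
          filter_upwards [ae_restrict_mem measurableSet_ball] with x hx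
          exact hinner x hx)
      _ = ∫ x, ψ x ∂m := setIntegral_eq_integral_of_forall_compl_eq_zero hψ0
  -- integrability of s*F and s*G on (0,1]
  have hFbd : ∀ t, |F t| ≤ 1 := by
    intro t
    rw [hF, abs_of_nonneg ENNReal.toReal_nonneg]
    refine ENNReal.toReal_le_of_le_ofReal zero_le_one ?_
    rw [ENNReal.ofReal_one, ← hμball]
    exact measure_mono inter_subset_left
  have hGbd : ∀ t, |G t| ≤ 1 := by
    intro t
    rw [hG, abs_of_nonneg ENNReal.toReal_nonneg]
    refine ENNReal.toReal_le_of_le_ofReal zero_le_one ?_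
    rw [ENNReal.ofReal_one, ← hνball]
    exact measure_mono inter_subset_left
  have hFint : Integrable (fun t => s t * F t) (volume.restrict (Ioc (0:ℝ) 1)) := by
    refine ⟨(hs_meas.mul hFmeas).aestronglyMeasurable,
      HasFiniteIntegral.of_bounded (C := 1) (ae_of_all _ fun t => ?_)⟩
    rw [Real.norm_eq_abs, abs_mul]
    calc |s t| * |F t| ≤ 1 * 1 := mul_le_mul (hs_bd t) (hFbd t) (abs_nonneg _) zero_le_one
      _ = 1 := one_mul 1
  have hGint : Integrable (fun t => s t * G t) (volume.restrict (Ioc (0:ℝ) 1)) := by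
    refine ⟨(hs_meas.mul hGmeas).aestronglyMeasurable,
      HasFiniteIntegral.of_bounded (C := 1) (ae_of_all _ fun t => ?_)⟩
    rw [Real.norm_eq_abs, abs_mul]
    calc |s t| * |G t| ≤ 1 * 1 := mul_le_mul (hs_bd t) (hGbd t) (abs_nonneg _) zero_le_one
      _ = 1 := one_mul 1
  -- the main identity
  have habs : ∫ t in (0:ℝ)..1, |F t - G t| = (∫ x, ψ x ∂μ) - ∫ x, ψ x ∂ν := by
    rw [intervalIntegral.integral_of_le zero_le_one]
    have hpt : ∀ t ∈ Ioc (0:ℝ) 1, |F t - G t| = s t * F t - s t * G t := by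
      intro t ht
      rw [hs_def, Set.indicator_of_mem ht]
      by_cases hc : G t ≤ F t
      · rw [if_pos hc, abs_of_nonneg (by linarith)]; ring
      · rw [if_neg hc, abs_of_neg (by push_neg at hc; linarith)]; ring
    rw [setIntegral_congr_fun measurableSet_Ioc hpt]
    rw [integral_sub hFint hGint]
    rw [key μ F hμball hF, key ν G hνball hG]
  rw [habs]
  -- final inequality
  rcases eq_or_ne L 0 with hL | hL
  · have hψz : ∀ x, ψ x = 0 := by
      intro x
      refine hS_one _ ?_
      calc (1:ℝ) ≤ 1 + (L:ℝ)*(‖x‖-1) := by rw [hL]; simp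
        _ ≤ h x := le_max_right _ _
    simp only [hψz, integral_zero, sub_zero, hL]
    simp
  · have hLpos : 0 < (L:ℝ) := by positivity
    set ψ₀ : EuclideanSpace ℝ (Fin n) → ℝ := fun x => (L:ℝ)⁻¹ * ψ x with hψ₀_def
    have hψ₀lip : LipschitzWith 1 ψ₀ := by
      refine LipschitzWith.of_dist_le_mul fun x y => ?_
      have h1 := hψ_lip.dist_le_mul x y
      rw [Real.dist_eq] at h1 ⊢
      rw [NNReal.coe_one, one_mul]
      have he : ψ₀ x - ψ₀ y = (L:ℝ)⁻¹ * (ψ x - ψ y) := by rw [hψ₀_def]; ring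
      rw [he, abs_mul, abs_of_pos (inv_pos.2 hLpos)]
      calc (L:ℝ)⁻¹ * |ψ x - ψ y| ≤ (L:ℝ)⁻¹ * ((L:ℝ) * dist x y) :=
            mul_le_mul_of_nonneg_left h1 (inv_pos.2 hLpos).le
        _ = dist x y := by field_simp
    have hψ₀0 : ∀ x ∉ ball (0 : EuclideanSpace ℝ (Fin n)) 1, ψ₀ x = 0 := by
      intro x hx
      rw [hψ₀_def]
      simp [hψ0 x hx]
    have hmem : |(∫ x, ψ₀ x ∂μ) - ∫ x, ψ₀ x ∂ν| ∈ {a : ℝ | ∃ ψ : EuclideanSpace ℝ (Fin n) → ℝ,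
        LipschitzWith 1 ψ ∧ (∀ x ∉ ball (0 : EuclideanSpace ℝ (Fin n)) 1, ψ x = 0) ∧
        a = |(∫ x, ψ x ∂μ) - ∫ x, ψ x ∂ν|} := ⟨ψ₀, hψ₀lip, hψ₀0, rfl⟩
    have hle : |(∫ x, ψ₀ x ∂μ) - ∫ x, ψ₀ x ∂ν| ≤ W1 μ ν := le_csSup hW1bdd hmem
    have e1 : ∫ x, ψ x ∂μ = (L:ℝ) * ∫ x, ψ₀ x ∂μ := by
      rw [hψ₀_def, integral_const_mul]
      rw [← mul_assoc, mul_inv_cancel₀ hLpos.ne', one_mul]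
    have e2 : ∫ x, ψ x ∂ν = (L:ℝ) * ∫ x, ψ₀ x ∂ν := by
      rw [hψ₀_def, integral_const_mul]
      rw [← mul_assoc, mul_inv_cancel₀ hLpos.ne', one_mul]
    calc (∫ x, ψ x ∂μ) - ∫ x, ψ x ∂ν
        = (L:ℝ) * ((∫ x, ψ₀ x ∂μ) - ∫ x, ψ₀ x ∂ν) := by rw [e1, e2, mul_sub]
      _ ≤ (L:ℝ) * |(∫ x, ψ₀ x ∂μ) - ∫ x, ψ₀ x ∂ν| :=
          mul_le_mul_of_nonneg_left (le_abs_self _) hLpos.le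
      _ ≤ (L:ℝ) * W1 μ ν := mul_le_mul_of_nonneg_left hle hLpos.le
end

section
/- Let μ be a doubling measure on ℝⁿ with doubling constant C_δ, support Σ, and let 0 ≤ d ≤ n, x ∈ Σ, r > 0. Let V ∈ A'(d,n), ν_V the normalized Hausdorff measure on V∩B(0,1), and W = x + rV. Let η > 0 satisfy (2C_δ)^η = 2. Then there is a constant C, depending only on C_δ, such that for every y ∈ Σ ∩ B(x, 2r/3), dist(y, W) ≤ C · W₁(μ_{x,r}, ν_V)^η · r. -/
open MeasureTheory Metric Set
open scoped ENNReal NNReal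

/-- The rescaled normalized measure `μ_{x,r}(A) = μ(x + rA) / μ(B(x,r))`. -/
noncomputable def blowup {n : ℕ} (μ : Measure (EuclideanSpace ℝ (Fin n)))
    (x : EuclideanSpace ℝ (Fin n)) (r : ℝ) : Measure (EuclideanSpace ℝ (Fin n)) :=
  (μ (ball x r))⁻¹ • μ.map (fun y => r⁻¹ • (y - x))

/-- The normalized restriction of `ℋ^d` to a `d`-plane `V`. -/
noncomputable def nuV {n : ℕ} (d : ℝ) (V : Set (EuclideanSpace ℝ (Fin n))) :
    Measure (EuclideanSpace ℝ (Fin n)) :=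
  (μH[d] (V ∩ ball 0 1))⁻¹ • (μH[d]).restrict V

private lemma aux_inv_mul_le_one (a : ℝ≥0∞) : a⁻¹ * a ≤ 1 := by
  rcases eq_or_ne a 0 with h | h
  · simp [h]
  rcases eq_or_ne a ⊤ with h' | h'
  · simp [h']
  · rw [ENNReal.inv_mul_cancel h h']

/-- Iterated doubling. -/
private lemma aux_doubling_iter {n : ℕ} (μ : Measure (EuclideanSpace ℝ (Fin n))) (Cδ : ℝ)
    (y : EuclideanSpace ℝ (Fin n))
    (hd : ∀ ρ > (0:ℝ), μ (ball y (2*ρ)) ≤ ENNReal.ofReal Cδ * μ (ball y ρ)) :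
    ∀ (k : ℕ) (ρ : ℝ), 0 < ρ →
      μ (ball y ρ) ≤ (ENNReal.ofReal Cδ)^k * μ (ball y (ρ / 2^k)) := by
  intro k
  induction k with
  | zero => intro ρ hρ; simp
  | succ k ih =>
    intro ρ hρ
    calc μ (ball y ρ) ≤ (ENNReal.ofReal Cδ)^k * μ (ball y (ρ / 2^k)) := ih ρ hρ
    _ ≤ (ENNReal.ofReal Cδ)^k * (ENNReal.ofReal Cδ * μ (ball y (ρ / 2^(k+1)))) := by
        gcongr
        have h2 : ρ / 2^k = 2 * (ρ / 2^(k+1)) := by ring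
        rw [h2]
        exact hd _ (by positivity)
    _ = (ENNReal.ofReal Cδ)^(k+1) * μ (ball y (ρ / 2^(k+1))) := by ring

/-- Any admissible test function has integral at most `3` against a measure giving the
unit ball mass at most one. -/
private lemma aux_integral_bound {n : ℕ} (ν : Measure (EuclideanSpace ℝ (Fin n)))
    (hν : ν (ball 0 1) ≤ 1) (ψ : EuclideanSpace ℝ (Fin n) → ℝ)
    (hlip : LipschitzWith 1 ψ) (h0 : ∀ u ∉ ball (0 : EuclideanSpace ℝ (Fin n)) 1, ψ u = 0)
    (w : EuclideanSpace ℝ (Fin n)) (hw : ‖w‖ = 2) :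
    |∫ u, ψ u ∂ν| ≤ 3 := by
  have hψw : ψ w = 0 := h0 w (by simp [mem_ball, dist_zero_right, hw])
  have hb : ∀ u, ENNReal.ofReal ‖ψ u‖ ≤
      (ball (0 : EuclideanSpace ℝ (Fin n)) 1).indicator (fun _ => (3:ℝ≥0∞)) u := by
    intro u
    by_cases hu : u ∈ ball (0 : EuclideanSpace ℝ (Fin n)) 1
    · rw [Set.indicator_of_mem hu]
      have h1 : ‖u‖ < 1 := by simpa [mem_ball, dist_zero_right] using hu
      have h2 : dist (ψ u) (ψ w) ≤ 1 * dist u w := hlip.dist_le_mul u w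
      have h3 : dist u w ≤ ‖u‖ + ‖w‖ := by
        rw [dist_eq_norm]; exact norm_sub_le u w
      have h2' : |ψ u| ≤ dist u w := by
        rw [hψw, dist_zero_right, Real.norm_eq_abs, one_mul] at h2
        exact h2
      have h4 : ‖ψ u‖ ≤ 3 := by
        rw [Real.norm_eq_abs]
        linarith [hw ▸ h3]
      calc ENNReal.ofReal ‖ψ u‖ ≤ ENNReal.ofReal 3 := ENNReal.ofReal_le_ofReal h4
        _ = (3:ℝ≥0∞) := by norm_num
    · rw [Set.indicator_of_notMem hu, h0 u hu]
      simp
  have hchain : (∫⁻ u, ENNReal.ofReal ‖ψ u‖ ∂ν) ≤ ENNReal.ofReal 3 := by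
    calc (∫⁻ u, ENNReal.ofReal ‖ψ u‖ ∂ν)
        ≤ ∫⁻ u, (ball (0 : EuclideanSpace ℝ (Fin n)) 1).indicator (fun _ => (3:ℝ≥0∞)) u ∂ν :=
          lintegral_mono hb
      _ = 3 * ν (ball 0 1) := by
          rw [lintegral_indicator measurableSet_ball, setLIntegral_const]
      _ ≤ 3 * 1 := by gcongr
      _ = ENNReal.ofReal 3 := by norm_num
  calc |∫ u, ψ u ∂ν| = ‖∫ u, ψ u ∂ν‖ := (Real.norm_eq_abs _).symm
    _ ≤ (∫⁻ u, ENNReal.ofReal ‖ψ u‖ ∂ν).toReal := norm_integral_le_lintegral_norm ψ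
    _ ≤ 3 := ENNReal.toReal_le_of_le_ofReal (by norm_num) hchain

set_option maxHeartbeats 2000000 in
/-- Let `μ` be doubling with constant `C_δ`, `η` satisfy `(2C_δ)^η = 2`.  Then there is a
constant `C` depending only on `C_δ` such that whenever `x ∈ Σ`, `r > 0`, `V` is a `d`-plane
meeting `B(0,1/2)`, and `W = x + rV`, every `y ∈ Σ ∩ B(x, 2r/3)` satisfies
`dist(y, W) ≤ C · W₁(μ_{x,r}, ν_V)^η · r`. -/
theorem stmt_5 (Cδ : ℝ) (hCδ : 1 ≤ Cδ) (η : ℝ) (hη : (2 * Cδ) ^ η = 2) :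
    ∃ C > (0 : ℝ), ∀ (n d : ℕ), d ≤ n →
      ∀ (μ : Measure (EuclideanSpace ℝ (Fin n))) [IsLocallyFiniteMeasure μ],
      ∀ S : Set (EuclideanSpace ℝ (Fin n)),
        S = {x | ∀ ρ > 0, 0 < μ (ball x ρ)} →
        (∀ x ∈ S, ∀ ρ > (0 : ℝ), μ (ball x (2 * ρ)) ≤ ENNReal.ofReal Cδ * μ (ball x ρ)) →
        ∀ x ∈ S, ∀ r > (0 : ℝ),
        ∀ V : AffineSubspace ℝ (EuclideanSpace ℝ (Fin n)),
          Module.finrank ℝ V.direction = d →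
          ((V : Set (EuclideanSpace ℝ (Fin n))) ∩ ball 0 (1/2)).Nonempty →
          ∀ y ∈ S ∩ ball x (2 * r / 3),
            infDist y ((fun z => x + r • z) '' (V : Set (EuclideanSpace ℝ (Fin n))))
              ≤ C * (W1 (blowup μ x r) (nuV (d : ℝ) (V : Set (EuclideanSpace ℝ (Fin n))))) ^ η * r := by
  refine ⟨40, by norm_num, ?_⟩
  intro n d hdn μ hloc S hS hdbl x hx r hr V hVrank hVball y hy
  obtain ⟨hyS, hyball⟩ := hy
  subst hS
  have hCδ0 : (0:ℝ) < Cδ := by linarith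
  have hr' : r ≠ 0 := ne_of_gt hr
  set f : EuclideanSpace ℝ (Fin n) → EuclideanSpace ℝ (Fin n) :=
    fun z => r⁻¹ • (z - x) with hf_def
  set p : EuclideanSpace ℝ (Fin n) := f y with hp_def
  have hf_cont : Continuous f := (continuous_id.sub continuous_const).const_smul r⁻¹
  have hf_meas : Measurable f := hf_cont.measurable
  have hdistf : ∀ z, dist (f z) p = r⁻¹ * dist z y := by
    intro z
    have h1 : f z - p = r⁻¹ • (z - y) := by
      rw [hp_def, hf_def]
      simp only [← smul_sub]
      congr 1
      abel
    rw [dist_eq_norm, h1, norm_smul, Real.norm_eq_abs, abs_of_pos (inv_pos.2 hr), dist_eq_norm]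
  have hdistf0 : ∀ z, dist (f z) 0 = r⁻¹ * dist z x := by
    intro z
    rw [dist_zero_right, hf_def]
    rw [norm_smul, Real.norm_eq_abs, abs_of_pos (inv_pos.2 hr), dist_eq_norm]
  have hyx : dist y x < 2 * r / 3 := mem_ball.mp hyball
  have hpnorm : ‖p‖ < 2/3 := by
    have h := hdistf0 y
    rw [← hp_def, dist_zero_right] at h
    rw [h]
    calc r⁻¹ * dist y x < r⁻¹ * (2*r/3) := by
          exact mul_lt_mul_of_pos_left hyx (inv_pos.2 hr)
      _ = 2/3 := by field_simp
  obtain ⟨z₀, hz₀V, hz₀ball⟩ := hVball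
  have hz₀norm : ‖z₀‖ < 1/2 := by simpa [mem_ball, dist_zero_right] using hz₀ball
  have hVne : (V : Set (EuclideanSpace ℝ (Fin n))).Nonempty := ⟨z₀, hz₀V⟩
  set t := infDist p (V : Set (EuclideanSpace ℝ (Fin n))) with ht_def
  have ht0 : 0 ≤ t := infDist_nonneg
  have ht7 : t < 7/6 := by
    have h1 : t ≤ dist p z₀ := infDist_le_dist_of_mem hz₀V
    have h2 : dist p z₀ ≤ ‖p‖ + ‖z₀‖ := by
      rw [dist_eq_norm]; exact norm_sub_le p z₀
    linarith
  have hrp : r • p = y - x := by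
    rw [hp_def, hf_def]
    simp only [smul_smul, mul_inv_cancel₀ hr', one_smul]
  have himg : infDist y ((fun z => x + r • z) '' (V : Set (EuclideanSpace ℝ (Fin n))))
      ≤ r * t := by
    apply le_of_forall_pos_le_add
    intro ε hε
    have hεr : 0 < ε / r := div_pos hε hr
    obtain ⟨z, hzV, hz⟩ := (infDist_lt_iff hVne).mp
      (show infDist p (V : Set (EuclideanSpace ℝ (Fin n))) < t + ε/r by
        rw [← ht_def]; linarith)
    have hdy : dist y (x + r • z) = r * dist p z := by
      rw [dist_eq_norm, dist_eq_norm]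
      have h1 : y - (x + r • z) = r • (p - z) := by
        rw [smul_sub, hrp]; abel
      rw [h1, norm_smul, Real.norm_eq_abs, abs_of_pos hr]
    calc infDist y ((fun z => x + r • z) '' (V : Set (EuclideanSpace ℝ (Fin n))))
        ≤ dist y (x + r • z) := infDist_le_dist_of_mem ⟨z, hzV, rfl⟩
      _ = r * dist p z := hdy
      _ ≤ r * (t + ε/r) := mul_le_mul_of_nonneg_left hz.le hr.le
      _ = r * t + ε := by
          rw [mul_add]
          congr 1
          field_simp
  have hW0 : 0 ≤ W1 (blowup μ x r) (nuV (d : ℝ) (V : Set (EuclideanSpace ℝ (Fin n)))) := by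
    apply Real.sSup_nonneg
    rintro a ⟨ψ, -, -, rfl⟩
    exact abs_nonneg _
  have hWη0 : 0 ≤ (W1 (blowup μ x r) (nuV (d : ℝ) (V : Set (EuclideanSpace ℝ (Fin n))))) ^ η :=
    Real.rpow_nonneg hW0 η
  rcases eq_or_lt_of_le ht0 with ht0' | htpos
  · calc infDist y ((fun z => x + r • z) '' (V : Set (EuclideanSpace ℝ (Fin n))))
        ≤ r * t := himg
      _ = 0 := by rw [← ht0', mul_zero]
      _ ≤ 40 * (W1 (blowup μ x r) (nuV (d : ℝ) (V : Set (EuclideanSpace ℝ (Fin n))))) ^ η * r :=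
        mul_nonneg (mul_nonneg (by norm_num) hWη0) hr.le
  -- main case : 0 < t
  have hη0 : 0 < η := by
    by_contra h
    push_neg at h
    have h1 : (2*Cδ)^η ≤ (2*Cδ)^(0:ℝ) :=
      Real.rpow_le_rpow_of_exponent_le (by linarith) h
    rw [Real.rpow_zero, hη] at h1
    linarith
  have hne : p ≠ z₀ := by
    intro h
    have h1 : t ≤ dist p z₀ := infDist_le_dist_of_mem hz₀V
    rw [h, dist_self] at h1
    linarith
  haveI : Nontrivial (EuclideanSpace ℝ (Fin n)) := nontrivial_of_ne _ _ hne
  obtain ⟨w, hw⟩ := (NormedSpace.sphere_nonempty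
    (E := EuclideanSpace ℝ (Fin n)) (x := 0) (r := 2)).mpr (by norm_num : (0:ℝ) ≤ 2)
  have hw2 : ‖w‖ = 2 := by rw [mem_sphere, dist_zero_right] at hw; exact hw
  have hm0 : 0 < μ (ball x r) := hx r hr
  have hmtop : μ (ball x r) ≠ ⊤ := measure_ball_lt_top.ne
  have hpre : f ⁻¹' (ball (0 : EuclideanSpace ℝ (Fin n)) 1) = ball x r := by
    ext z
    simp only [mem_preimage, mem_ball]
    rw [hdistf0 z, inv_mul_lt_iff₀ hr, mul_one]
  have hblow_eq : blowup μ x r = (μ (ball x r))⁻¹ • μ.map f := by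
    rw [hf_def]; rfl
  have hmap_ball : (μ.map f) (ball 0 1) = μ (ball x r) := by
    rw [Measure.map_apply hf_meas measurableSet_ball, hpre]
  have hblow_ball : blowup μ x r (ball 0 1) ≤ 1 := by
    rw [hblow_eq, Measure.smul_apply, smul_eq_mul, hmap_ball]
    exact aux_inv_mul_le_one _
  have hnu_ball : nuV (d : ℝ) (V : Set (EuclideanSpace ℝ (Fin n))) (ball 0 1) ≤ 1 := by
    simp only [nuV]
    rw [Measure.smul_apply, smul_eq_mul, Measure.restrict_apply measurableSet_ball,
      Set.inter_comm (V : Set (EuclideanSpace ℝ (Fin n))) (ball 0 1)]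
    exact aux_inv_mul_le_one _
  have hbdd : BddAbove {a : ℝ | ∃ ψ : EuclideanSpace ℝ (Fin n) → ℝ,
      LipschitzWith 1 ψ ∧ (∀ u ∉ ball (0 : EuclideanSpace ℝ (Fin n)) 1, ψ u = 0) ∧
      a = |(∫ u, ψ u ∂(blowup μ x r)) -
        ∫ u, ψ u ∂(nuV (d : ℝ) (V : Set (EuclideanSpace ℝ (Fin n))))|} := by
    refine ⟨6, ?_⟩
    rintro a ⟨ψ, hlip, h0, rfl⟩
    have h1 := aux_integral_bound _ hblow_ball ψ hlip h0 w hw2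
    have h2 := aux_integral_bound _ hnu_ball ψ hlip h0 w hw2
    calc |(∫ u, ψ u ∂(blowup μ x r)) -
        ∫ u, ψ u ∂(nuV (d : ℝ) (V : Set (EuclideanSpace ℝ (Fin n))))|
        ≤ |∫ u, ψ u ∂(blowup μ x r)| +
          |∫ u, ψ u ∂(nuV (d : ℝ) (V : Set (EuclideanSpace ℝ (Fin n))))| := abs_sub _ _
      _ ≤ 6 := by linarith
  set s := min t (1/2 : ℝ) with hs_def
  have hs0 : 0 < s := lt_min htpos (by norm_num)
  have hst : s ≤ t := min_le_left _ _
  have hs_half : s ≤ 1/2 := min_le_right _ _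
  set ψ₀ : EuclideanSpace ℝ (Fin n) → ℝ := fun u => max 0 (s/2 - dist u p) with hψ₀_def
  have hψ₀_lip : LipschitzWith 1 ψ₀ := by
    have h0 : LipschitzWith 1 (fun a : ℝ => s/2 - a) := by
      apply LipschitzWith.of_dist_le_mul
      intro a b
      have h : s/2 - a - (s/2 - b) = -(a - b) := by ring
      rw [Real.dist_eq, Real.dist_eq, h, abs_neg, NNReal.coe_one, one_mul]
    have h1 : LipschitzWith 1 (fun u : EuclideanSpace ℝ (Fin n) => dist u p) :=
      LipschitzWith.dist_left p
    have h2 : LipschitzWith 1 (fun u : EuclideanSpace ℝ (Fin n) => s/2 - dist u p) := by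
      simpa [Function.comp_def] using h0.comp h1
    exact h2.const_max 0
  have hψ₀_zero : ∀ u ∉ ball (0 : EuclideanSpace ℝ (Fin n)) 1, ψ₀ u = 0 := by
    intro u hu
    have h1 : (1:ℝ) ≤ ‖u‖ := by
      by_contra h
      push_neg at h
      exact hu (by simpa [mem_ball, dist_zero_right] using h)
    have h2 : ‖u‖ - ‖p‖ ≤ dist u p := by
      rw [dist_eq_norm]; exact norm_sub_norm_le u p
    apply max_eq_left
    linarith
  have hψ₀_V : ∀ z ∈ (V : Set (EuclideanSpace ℝ (Fin n))), ψ₀ z = 0 := by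
    intro z hz
    apply max_eq_left
    have h1 : t ≤ dist p z := infDist_le_dist_of_mem hz
    rw [dist_comm] at h1
    linarith
  have hψ₀_nonneg : ∀ u, 0 ≤ ψ₀ u := fun u => le_max_left _ _
  have hψ₀_cont : Continuous ψ₀ := by
    apply Continuous.max continuous_const
    exact continuous_const.sub (continuous_id.dist continuous_const)
  have hI2 : ∫ u, ψ₀ u ∂(nuV (d : ℝ) (V : Set (EuclideanSpace ℝ (Fin n)))) = 0 := by
    simp only [nuV]
    rw [integral_smul_measure, setIntegral_eq_zero_of_forall_eq_zero hψ₀_V]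
    simp
  -- choice of k₀
  have hs16 : (16:ℝ) ≤ 8/s := by
    rw [le_div_iff₀ hs0]; linarith
  classical
  obtain ⟨k₁, hk₁⟩ := pow_unbounded_of_one_lt (8/s) (one_lt_two (α := ℝ))
  have hPex : ∃ k : ℕ, 8/s ≤ (2:ℝ)^k := ⟨k₁, hk₁.le⟩
  set k₀ := Nat.find hPex with hk₀_def
  have hk₀1 : 8/s ≤ (2:ℝ)^k₀ := Nat.find_spec hPex
  have hk₀ne : k₀ ≠ 0 := by
    intro h
    rw [h, pow_zero] at hk₀1
    linarith
  have hk₀2 : (2:ℝ)^k₀ ≤ 16/s := by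
    have hlt : ¬ (8/s ≤ (2:ℝ)^(k₀-1)) := Nat.find_min hPex (Nat.pred_lt hk₀ne)
    push_neg at hlt
    have h2 : (2:ℝ)^k₀ = 2 * 2^(k₀-1) := by
      conv_lhs => rw [← Nat.succ_pred_eq_of_ne_zero hk₀ne]
      rw [pow_succ, Nat.pred_eq_sub_one]; ring
    have h3 : 2 * (8/s) = 16/s := by ring
    rw [h2]; linarith
  have h8s : (8:ℝ) ≤ s * 2^k₀ := by
    rw [div_le_iff₀ hs0] at hk₀1
    nlinarith
  -- measure chain
  have hq0 : 0 < μ (ball y (r*s/4)) := hyS _ (by positivity)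
  have hqtop : μ (ball y (r*s/4)) ≠ ⊤ := measure_ball_lt_top.ne
  have hball_sub : ball x r ⊆ ball y (2*r) := by
    intro z hz
    rw [mem_ball] at hz ⊢
    have h1 := dist_triangle z x y
    have hxy : dist x y < 2*r/3 := by rw [dist_comm]; exact hyx
    linarith
  have hrad : 2*r/2^k₀ ≤ r*s/4 := by
    rw [div_le_iff₀ (by positivity : (0:ℝ) < 2^k₀)]
    nlinarith [hr.le]
  have hchain : μ (ball x r) ≤ (ENNReal.ofReal Cδ)^k₀ * μ (ball y (r*s/4)) := by
    calc μ (ball x r) ≤ μ (ball y (2*r)) := measure_mono hball_sub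
      _ ≤ (ENNReal.ofReal Cδ)^k₀ * μ (ball y (2*r/2^k₀)) :=
          aux_doubling_iter μ Cδ y (hdbl y hyS) k₀ (2*r) (by positivity)
      _ ≤ (ENNReal.ofReal Cδ)^k₀ * μ (ball y (r*s/4)) := by gcongr
  have hM0 : 0 < (μ (ball x r)).toReal := ENNReal.toReal_pos hm0.ne' hmtop
  have hQ0 : 0 < (μ (ball y (r*s/4))).toReal := ENNReal.toReal_pos hq0.ne' hqtop
  have hMQ : (μ (ball x r)).toReal ≤ Cδ^k₀ * (μ (ball y (r*s/4))).toReal := by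
    have h1 : ((ENNReal.ofReal Cδ)^k₀ * μ (ball y (r*s/4))).toReal
        = Cδ^k₀ * (μ (ball y (r*s/4))).toReal := by
      rw [ENNReal.toReal_mul, ENNReal.toReal_pow, ENNReal.toReal_ofReal hCδ0.le]
    rw [← h1]
    exact ENNReal.toReal_mono
      (ENNReal.mul_ne_top (ENNReal.pow_ne_top ENNReal.ofReal_ne_top) hqtop) hchain
  -- lower bound on the integral of ψ₀ against the blowup
  have hcs : HasCompactSupport (fun z => ψ₀ (f z)) := by
    apply HasCompactSupport.intro (isCompact_closedBall y (r*s/2))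
    intro z hz
    have h1 : r*s/2 < dist z y := by
      simp only [mem_closedBall, not_le] at hz
      exact hz
    have h3 : s/2 < dist (f z) p := by
      rw [hdistf z]
      have h4 := mul_lt_mul_of_pos_left h1 (inv_pos.2 hr)
      have h5 : r⁻¹ * (r*s/2) = s/2 := by field_simp
      linarith
    exact max_eq_left (by linarith)
  have hint : Integrable (fun z => ψ₀ (f z)) μ :=
    (hψ₀_cont.comp hf_cont).integrable_of_hasCompactSupport hcs
  have hg_int : Integrable ((ball y (r*s/4)).indicator (fun _ => s/4)) μ := by
    rw [integrable_indicator_iff measurableSet_ball]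
    exact integrableOn_const measure_ball_lt_top.ne (by simp)
  have hle : ∀ z, (ball y (r*s/4)).indicator (fun _ => s/4) z ≤ ψ₀ (f z) := by
    intro z
    by_cases hz : z ∈ ball y (r*s/4)
    · rw [indicator_of_mem hz]
      rw [mem_ball] at hz
      have h2 : dist (f z) p < s/4 := by
        rw [hdistf z]
        have h4 := mul_lt_mul_of_pos_left hz (inv_pos.2 hr)
        have h5 : r⁻¹ * (r*s/4) = s/4 := by field_simp
        linarith
      have h6 : s/4 ≤ s/2 - dist (f z) p := by linarith
      exact le_trans h6 (le_max_right _ _)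
    · rw [indicator_of_notMem hz]
      exact hψ₀_nonneg _
  have hJ : s/4 * (μ (ball y (r*s/4))).toReal ≤ ∫ z, ψ₀ (f z) ∂μ := by
    have h1 : ∫ z, (ball y (r*s/4)).indicator (fun _ => s/4) z ∂μ
        = (μ (ball y (r*s/4))).toReal * (s/4) := by
      rw [integral_indicator_const (s/4) measurableSet_ball, smul_eq_mul, measureReal_def]
    calc s/4 * (μ (ball y (r*s/4))).toReal
        = ∫ z, (ball y (r*s/4)).indicator (fun _ => s/4) z ∂μ := by rw [h1]; ring
      _ ≤ ∫ z, ψ₀ (f z) ∂μ := integral_mono hg_int hint hle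
  have hI : ∫ u, ψ₀ u ∂(blowup μ x r) = (μ (ball x r)).toReal⁻¹ * ∫ z, ψ₀ (f z) ∂μ := by
    rw [hblow_eq, integral_smul_measure,
      integral_map hf_meas.aemeasurable hψ₀_cont.aestronglyMeasurable,
      smul_eq_mul, ENNReal.toReal_inv]
  have hIlow : 2/(2*Cδ)^k₀ ≤ ∫ u, ψ₀ u ∂(blowup μ x r) := by
    rw [hI]
    have hC : (0:ℝ) < Cδ^k₀ := pow_pos hCδ0 _
    have h2k : (0:ℝ) < (2:ℝ)^k₀ := by positivity
    have key : 2/(2*Cδ)^k₀ ≤ (s/4) * (μ (ball y (r*s/4))).toReal / (μ (ball x r)).toReal := by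
      rw [mul_pow, div_le_div_iff₀ (by positivity) hM0]
      nlinarith [mul_pos hQ0 hC, hMQ, h8s, hs0]
    calc 2/(2*Cδ)^k₀ ≤ (s/4) * (μ (ball y (r*s/4))).toReal / (μ (ball x r)).toReal := key
      _ ≤ (μ (ball x r)).toReal⁻¹ * ∫ z, ψ₀ (f z) ∂μ := by
          rw [div_eq_mul_inv, mul_comm]
          exact mul_le_mul_of_nonneg_left hJ (inv_nonneg.2 hM0.le)
  have hmem : |(∫ u, ψ₀ u ∂(blowup μ x r)) -
      ∫ u, ψ₀ u ∂(nuV (d : ℝ) (V : Set (EuclideanSpace ℝ (Fin n))))| ∈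
      {a : ℝ | ∃ ψ : EuclideanSpace ℝ (Fin n) → ℝ,
        LipschitzWith 1 ψ ∧ (∀ u ∉ ball (0 : EuclideanSpace ℝ (Fin n)) 1, ψ u = 0) ∧
        a = |(∫ u, ψ u ∂(blowup μ x r)) -
          ∫ u, ψ u ∂(nuV (d : ℝ) (V : Set (EuclideanSpace ℝ (Fin n))))|} :=
    ⟨ψ₀, hψ₀_lip, hψ₀_zero, rfl⟩
  have hWlow : 2/(2*Cδ)^k₀
      ≤ W1 (blowup μ x r) (nuV (d : ℝ) (V : Set (EuclideanSpace ℝ (Fin n)))) := by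
    have h1 := le_csSup hbdd hmem
    rw [hI2, sub_zero] at h1
    calc 2/(2*Cδ)^k₀ ≤ ∫ u, ψ₀ u ∂(blowup μ x r) := hIlow
      _ ≤ |∫ u, ψ₀ u ∂(blowup μ x r)| := le_abs_self _
      _ ≤ W1 (blowup μ x r) (nuV (d : ℝ) (V : Set (EuclideanSpace ℝ (Fin n)))) := h1
  -- pass to the power η
  have hbase : ((2:ℝ)/(2*Cδ)^k₀)^η = 2^η/2^k₀ := by
    rw [Real.div_rpow (by norm_num) (by positivity)]
    congr 1
    have h2C : (0:ℝ) ≤ 2*Cδ := by linarith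
    rw [← Real.rpow_natCast_mul h2C k₀ η, mul_comm ((k₀:ℕ):ℝ) η,
      Real.rpow_mul_natCast h2C η k₀, hη]
  have hrpow : 2^η/2^k₀
      ≤ (W1 (blowup μ x r) (nuV (d : ℝ) (V : Set (EuclideanSpace ℝ (Fin n))))) ^ η := by
    rw [← hbase]
    exact Real.rpow_le_rpow (by positivity) hWlow hη0.le
  have hfinal : s ≤ 16 * (W1 (blowup μ x r)
      (nuV (d : ℝ) (V : Set (EuclideanSpace ℝ (Fin n))))) ^ η := by
    have h2 : (1:ℝ) ≤ 2^η := Real.one_le_rpow one_le_two hη0.le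
    have h4 : s/16 ≤ 1/(2:ℝ)^k₀ := by
      rw [div_le_div_iff₀ (by norm_num) (by positivity)]
      rw [le_div_iff₀ hs0] at hk₀2
      linarith
    have h5 : (1:ℝ)/2^k₀ ≤ 2^η/2^k₀ := by gcongr
    linarith
  have htle : t ≤ (7/3) * s := by
    rcases le_total t (1/2 : ℝ) with h | h
    · have hseq : s = t := min_eq_left h
      rw [hseq]; linarith
    · have hseq : s = 1/2 := min_eq_right h
      rw [hseq]; linarith
  calc infDist y ((fun z => x + r • z) '' (V : Set (EuclideanSpace ℝ (Fin n))))
      ≤ r * t := himg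
    _ ≤ 40 * (W1 (blowup μ x r) (nuV (d : ℝ) (V : Set (EuclideanSpace ℝ (Fin n))))) ^ η * r := by
        nlinarith [hfinal, htle, hWη0, hr.le, hs0.le]
end

section
/- Let μ be a Radon measure on ℝⁿ with support Σ, let 0 ≤ d ≤ n, x ∈ Σ, r > 0, and let V ∈ A'(d,n) with W = x + rV. Then for every y ∈ W ∩ B(x, r/2), dist(y, Σ) ≤ 8 · W₁(μ_{x,r}, ν_V)^{1/(d+1)} · r. -/
set_option maxHeartbeats 1000000

open MeasureTheory Metric Set Module
open scoped ENNReal NNReal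

variable {n : ℕ}




/-- Scaling of Hausdorff measure of balls on an affine subspace. -/
lemma plane_ball_scale (d : ℕ) (V : AffineSubspace ℝ (EuclideanSpace ℝ (Fin n)))
    {p q : EuclideanSpace ℝ (Fin n)} (hp : p ∈ V) (hq : q ∈ V) {ρ : ℝ} (hρ : 0 < ρ) :
    μH[(d : ℝ)] ((V : Set (EuclideanSpace ℝ (Fin n))) ∩ ball q ρ)
      = ENNReal.ofReal ρ ^ d * μH[(d : ℝ)] ((V : Set (EuclideanSpace ℝ (Fin n))) ∩ ball p 1) := by
  have key : ∀ (a b : EuclideanSpace ℝ (Fin n)), a ∈ V → b ∈ V → ∀ (σ s : ℝ), 0 < σ → 0 < s →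
      μH[(d : ℝ)] ((V : Set (EuclideanSpace ℝ (Fin n))) ∩ ball b (σ * s))
        ≤ ENNReal.ofReal σ ^ d * μH[(d : ℝ)] ((V : Set (EuclideanSpace ℝ (Fin n))) ∩ ball a s) := by
    intro a b ha hb σ s hσ hs
    set f : EuclideanSpace ℝ (Fin n) → EuclideanSpace ℝ (Fin n) := fun z => b + σ • (z - a) with hf
    have himg : (V : Set (EuclideanSpace ℝ (Fin n))) ∩ ball b (σ * s)
        ⊆ f '' ((V : Set (EuclideanSpace ℝ (Fin n))) ∩ ball a s) := by
      rintro w ⟨hwV, hw⟩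
      refine ⟨a + σ⁻¹ • (w - b), ⟨?_, ?_⟩, ?_⟩
      · have hmem : σ⁻¹ • (w - b) ∈ V.direction :=
          Submodule.smul_mem _ _ (AffineSubspace.vsub_mem_direction hwV hb)
        simpa [vadd_eq_add, add_comm] using AffineSubspace.vadd_mem_of_mem_direction hmem ha
      · rw [mem_ball, dist_eq_norm, add_sub_cancel_left, norm_smul, Real.norm_eq_abs,
          abs_of_pos (inv_pos.mpr hσ)]
        rw [mem_ball, dist_eq_norm] at hw
        calc σ⁻¹ * ‖w - b‖ < σ⁻¹ * (σ * s) := by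
              exact mul_lt_mul_of_pos_left hw (inv_pos.mpr hσ)
          _ = s := by field_simp
      · simp only [hf, add_sub_cancel_left, smul_smul, mul_inv_cancel₀ hσ.ne', one_smul]
        abel
    have hlip : LipschitzWith σ.toNNReal f := by
      apply LipschitzWith.of_dist_le_mul
      intro z₁ z₂
      have : f z₁ - f z₂ = σ • (z₁ - z₂) := by
        simp only [hf]
        rw [add_sub_add_left_eq_sub, ← smul_sub, sub_sub_sub_cancel_right]
      rw [dist_eq_norm, this, norm_smul, Real.norm_eq_abs, abs_of_pos hσ, dist_eq_norm,
        Real.coe_toNNReal _ hσ.le]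
    calc μH[(d : ℝ)] ((V : Set (EuclideanSpace ℝ (Fin n))) ∩ ball b (σ * s))
        ≤ μH[(d : ℝ)] (f '' ((V : Set (EuclideanSpace ℝ (Fin n))) ∩ ball a s)) :=
          measure_mono himg
      _ ≤ (σ.toNNReal : ℝ≥0∞) ^ (d : ℝ) * μH[(d : ℝ)]
            ((V : Set (EuclideanSpace ℝ (Fin n))) ∩ ball a s) :=
          hlip.hausdorffMeasure_image_le (Nat.cast_nonneg d) _
      _ = ENNReal.ofReal σ ^ d * μH[(d : ℝ)] ((V : Set (EuclideanSpace ℝ (Fin n))) ∩ ball a s) := by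
          rw [ENNReal.rpow_natCast]; rfl
  have h1 : μH[(d : ℝ)] ((V : Set (EuclideanSpace ℝ (Fin n))) ∩ ball q ρ)
      ≤ ENNReal.ofReal ρ ^ d * μH[(d : ℝ)] ((V : Set (EuclideanSpace ℝ (Fin n))) ∩ ball p 1) := by
    simpa using key p q hp hq ρ 1 hρ one_pos
  have h2 : μH[(d : ℝ)] ((V : Set (EuclideanSpace ℝ (Fin n))) ∩ ball p 1)
      ≤ ENNReal.ofReal ρ⁻¹ ^ d * μH[(d : ℝ)] ((V : Set (EuclideanSpace ℝ (Fin n))) ∩ ball q ρ) := by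
    have := key q p hq hp ρ⁻¹ ρ (inv_pos.mpr hρ) hρ
    simpa [inv_mul_cancel₀ hρ.ne'] using this
  have hmul : ENNReal.ofReal ρ ^ d * ENNReal.ofReal ρ⁻¹ ^ d = 1 := by
    rw [← mul_pow, ← ENNReal.ofReal_mul hρ.le, mul_inv_cancel₀ hρ.ne', ENNReal.ofReal_one, one_pow]
  refine le_antisymm h1 ?_
  calc ENNReal.ofReal ρ ^ d * μH[(d : ℝ)] ((V : Set (EuclideanSpace ℝ (Fin n))) ∩ ball p 1)
      ≤ ENNReal.ofReal ρ ^ d * (ENNReal.ofReal ρ⁻¹ ^ d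
          * μH[(d : ℝ)] ((V : Set (EuclideanSpace ℝ (Fin n))) ∩ ball q ρ)) :=
        mul_le_mul_right h2 _
    _ = μH[(d : ℝ)] ((V : Set (EuclideanSpace ℝ (Fin n))) ∩ ball q ρ) := by
        rw [← mul_assoc, hmul, one_mul]



lemma euclidean_hausdorff_ball_pos_fin (d : ℕ) :
    0 < μH[(d : ℝ)] (ball (0 : EuclideanSpace ℝ (Fin d)) 1) ∧
      μH[(d : ℝ)] (ball (0 : EuclideanSpace ℝ (Fin d)) 1) < ⊤ := by
  have hfr : ((finrank ℝ (EuclideanSpace ℝ (Fin d)) : ℕ) : ℝ) = (d : ℝ) := by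
    rw [finrank_euclideanSpace_fin]
  haveI : (μH[(d : ℝ)] : Measure (EuclideanSpace ℝ (Fin d))).IsAddHaarMeasure := by
    rw [← hfr]; infer_instance
  constructor
  · exact measure_ball_pos _ _ one_pos
  · exact lt_of_le_of_lt (measure_mono ball_subset_closedBall)
      (isCompact_closedBall _ _).measure_lt_top

lemma plane_ball_pos_fin (d : ℕ) (V : AffineSubspace ℝ (EuclideanSpace ℝ (Fin n)))
    (hVd : finrank ℝ V.direction = d) {p : EuclideanSpace ℝ (Fin n)} (hp : p ∈ V) :
    0 < μH[(d : ℝ)] ((V : Set (EuclideanSpace ℝ (Fin n))) ∩ ball p 1) ∧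
      μH[(d : ℝ)] ((V : Set (EuclideanSpace ℝ (Fin n))) ∩ ball p 1) < ⊤ := by
  haveI : FiniteDimensional ℝ V.direction := inferInstance
  let b : OrthonormalBasis (Fin d) ℝ V.direction :=
    (stdOrthonormalBasis ℝ V.direction).reindex (finCongr hVd)
  set F : EuclideanSpace ℝ (Fin d) → EuclideanSpace ℝ (Fin n) :=
    fun v => p + ((b.repr.symm v : V.direction) : EuclideanSpace ℝ (Fin n)) with hF
  have hFiso : Isometry F := by
    intro u v
    simp only [hF, edist_dist, dist_eq_norm, add_sub_add_left_eq_sub]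
    rw [← Submodule.coe_sub, ← map_sub, Submodule.norm_coe]
    rw [b.repr.symm.norm_map]
  have himg : F '' ball 0 1 = (V : Set (EuclideanSpace ℝ (Fin n))) ∩ ball p 1 := by
    ext w
    constructor
    · rintro ⟨v, hv, rfl⟩
      refine ⟨?_, ?_⟩
      · have := AffineSubspace.vadd_mem_of_mem_direction
          (show ((b.repr.symm v : V.direction) : EuclideanSpace ℝ (Fin n)) ∈ V.direction from
            (b.repr.symm v).2) hp
        simpa [vadd_eq_add, add_comm] using this
      · rw [mem_ball, dist_eq_norm, add_sub_cancel_left, Submodule.norm_coe,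
          b.repr.symm.norm_map]
        simpa [dist_eq_norm] using hv
    · rintro ⟨hwV, hw⟩
      have hmem : w - p ∈ V.direction := AffineSubspace.vsub_mem_direction hwV hp
      refine ⟨b.repr ⟨w - p, hmem⟩, ?_, ?_⟩
      · rw [mem_ball, dist_eq_norm, sub_zero, b.repr.norm_map]
        simpa [dist_eq_norm] using hw
      · simp [hF]
  have := euclidean_hausdorff_ball_pos_fin d
  rw [← himg, hFiso.hausdorffMeasure_image (Or.inl (Nat.cast_nonneg d))]
  exact this

/-- For `x ∈ Σ`, `r > 0`, `V` a `d`-plane meeting `B(0,1/2)` and `W = x + rV`, every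
`y ∈ W ∩ B(x, r/2)` satisfies `dist(y, Σ) ≤ 8 · W₁(μ_{x,r}, ν_V)^{1/(d+1)} · r`. -/
theorem stmt_6 {n : ℕ} (d : ℕ) (hd : d ≤ n)
    (μ : Measure (EuclideanSpace ℝ (Fin n))) [IsLocallyFiniteMeasure μ]
    (S : Set (EuclideanSpace ℝ (Fin n)))
    (hS : S = {x | ∀ ρ > 0, 0 < μ (ball x ρ)})
    (x : EuclideanSpace ℝ (Fin n)) (hx : x ∈ S) (r : ℝ) (hr : 0 < r)
    (V : AffineSubspace ℝ (EuclideanSpace ℝ (Fin n)))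
    (hVd : Module.finrank ℝ V.direction = d)
    (hVmeet : ((V : Set (EuclideanSpace ℝ (Fin n))) ∩ ball 0 (1/2)).Nonempty) :
    ∀ y ∈ ((fun z => x + r • z) '' (V : Set (EuclideanSpace ℝ (Fin n)))) ∩ ball x (r / 2),
      infDist y S
        ≤ 8 * (W1 (blowup μ x r) (nuV (d : ℝ) (V : Set (EuclideanSpace ℝ (Fin n)))))
            ^ ((1 : ℝ) / (d + 1)) * r := by
  intro y hy
  obtain ⟨hyW, hyB⟩ := hy
  set ν := nuV (d : ℝ) (V : Set (EuclideanSpace ℝ (Fin n))) with hν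
  set bμ := blowup μ x r with hbμ
  set ε := W1 bμ ν with hεdef
  -- nonnegativity of W1
  have hε0 : 0 ≤ ε := by
    apply Real.sSup_nonneg
    rintro a ⟨ψ, -, -, rfl⟩
    exact abs_nonneg _
  have hrpow0 : 0 ≤ ε ^ ((1 : ℝ) / (d + 1)) := Real.rpow_nonneg hε0 _
  by_contra hcon
  push_neg at hcon
  set D := infDist y S with hDdef
  have hDdist : D ≤ dist y x := infDist_le_dist_of_mem hx
  have hdyx : dist y x < r / 2 := mem_ball.mp hyB
  have h8r : (0 : ℝ) < 8 * r := by linarith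
  set a := ε ^ ((1 : ℝ) / (d + 1)) with hadef
  have haD : a < D / (8 * r) := by
    rw [lt_div_iff₀ h8r]
    nlinarith [hcon]
  set δ := (a + D / (8 * r)) / 2 with hδdef
  have hδa : a < δ := by
    rw [hδdef]; linarith
  have hδD : δ < D / (8 * r) := by
    rw [hδdef]; linarith
  have hδ0 : 0 < δ := lt_of_le_of_lt hrpow0 hδa
  have h8δr : 8 * δ * r < D := by
    rw [lt_div_iff₀ h8r] at hδD; linarith
  have hδ16 : δ < 1 / 16 := by
    have : D / (8 * r) < 1 / 16 := by
      rw [div_lt_div_iff₀ h8r (by norm_num)]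
      nlinarith
    linarith
  -- the null ball
  have hnull : μ (ball y (8 * δ * r)) = 0 := by
    apply measure_null_of_locally_null
    intro z hz
    have hzS : z ∉ S := by
      intro hzS
      have h1 : D ≤ dist y z := infDist_le_dist_of_mem hzS
      have h2 : dist z y < 8 * δ * r := mem_ball.mp hz
      rw [dist_comm] at h2
      linarith
    rw [hS, mem_setOf_eq] at hzS
    push_neg at hzS
    obtain ⟨ρ, hρ, hμρ⟩ := hzS
    exact ⟨ball z ρ, mem_nhdsWithin_of_mem_nhds (ball_mem_nhds z hρ),
      le_antisymm hμρ zero_le⟩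
  -- the point y' on V
  obtain ⟨v, hvV, hyv⟩ := hyW
  set y' := r⁻¹ • (y - x) with hy'def
  have hy'v : y' = v := by
    rw [hy'def, ← hyv]
    simp [smul_smul, inv_mul_cancel₀ hr.ne']
  have hy'V : y' ∈ V := by rw [hy'v]; exact hvV
  have hy'norm : ‖y'‖ < 1 / 2 := by
    rw [hy'def, norm_smul, Real.norm_eq_abs, abs_of_pos (inv_pos.mpr hr)]
    have : ‖y - x‖ < r / 2 := by rwa [← dist_eq_norm]
    rw [inv_mul_lt_iff₀ hr]  -- maybe name differs
    nlinarith
  -- the test function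
  set ψ : EuclideanSpace ℝ (Fin n) → ℝ := fun z => max 0 (4 * δ - dist z y') with hψdef
  have hψlip : LipschitzWith 1 ψ := by
    apply LipschitzWith.of_dist_le_mul
    intro z₁ z₂
    simp only [Real.dist_eq, NNReal.coe_one, one_mul]
    have h1 : |(4 * δ - dist z₁ y') - (4 * δ - dist z₂ y')| ≤ dist z₁ z₂ := by
      have := abs_dist_sub_le z₁ z₂ y'
      rw [abs_sub_comm]
      simpa [sub_sub_sub_cancel_left] using abs_dist_sub_le z₁ z₂ y'
    calc |ψ z₁ - ψ z₂| ≤ |(4 * δ - dist z₁ y') - (4 * δ - dist z₂ y')| := by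
          rw [hψdef]
          simp only [max_comm (0:ℝ)]
          exact abs_max_sub_max_le_abs _ _ _
      _ ≤ dist z₁ z₂ := h1
  have hψmem : ∀ z, ψ z ≠ 0 → z ∈ ball y' (4 * δ) := by
    intro z hz
    rw [mem_ball]
    by_contra h
    push_neg at h
    have : 4 * δ - dist z y' ≤ 0 := by linarith
    rw [hψdef] at hz
    simp only [max_eq_left this] at hz
    exact hz rfl
  have hballsub : ball y' (4 * δ) ⊆ ball (0 : EuclideanSpace ℝ (Fin n)) 1 := by
    intro z hz
    rw [mem_ball] at hz ⊢
    rw [dist_zero_right]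
    have h1 : dist z 0 ≤ dist z y' + dist y' 0 := dist_triangle _ _ _
    rw [dist_zero_right, dist_zero_right] at h1
    linarith [hy'norm]
  have hψsupp : ∀ z ∉ ball (0 : EuclideanSpace ℝ (Fin n)) 1, ψ z = 0 := by
    intro z hz
    by_contra h
    exact hz (hballsub (hψmem z h))
  have hψcont : Continuous ψ := hψlip.continuous
  have hψnonneg : ∀ z, 0 ≤ ψ z := fun z => le_max_left _ _
  have hψle : ∀ z, ψ z ≤ 4 * δ := by
    intro z
    rw [hψdef]
    apply max_le (by linarith)
    simp [dist_nonneg]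
  -- Hausdorff measure facts on V
  obtain ⟨p₀, hp₀V, hp₀ball⟩ := hVmeet
  have hp₀V' : p₀ ∈ V := hp₀V
  set C := μH[(d : ℝ)] ((V : Set (EuclideanSpace ℝ (Fin n))) ∩ ball p₀ 1) with hCdef
  obtain ⟨hC0, hCtop⟩ := plane_ball_pos_fin d V hVd hp₀V'
  have hp₀norm : ‖p₀‖ < 1 / 2 := by
    have := mem_ball.mp hp₀ball
    rwa [dist_zero_right] at this
  have hsub1 : (V : Set (EuclideanSpace ℝ (Fin n))) ∩ ball p₀ 2⁻¹
      ⊆ (V : Set (EuclideanSpace ℝ (Fin n))) ∩ ball 0 1 := by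
    rintro z ⟨hzV, hz⟩
    refine ⟨hzV, ?_⟩
    rw [mem_ball] at hz ⊢
    rw [dist_zero_right]
    have h1 : dist z 0 ≤ dist z p₀ + dist p₀ 0 := dist_triangle _ _ _
    rw [dist_zero_right, dist_zero_right] at h1
    linarith
  have hsub2 : (V : Set (EuclideanSpace ℝ (Fin n))) ∩ ball 0 1
      ⊆ (V : Set (EuclideanSpace ℝ (Fin n))) ∩ ball p₀ 2 := by
    rintro z ⟨hzV, hz⟩
    refine ⟨hzV, ?_⟩
    rw [mem_ball] at hz ⊢
    rw [dist_zero_right] at hz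
    have h1 : dist z p₀ ≤ dist z 0 + dist 0 p₀ := dist_triangle _ _ _
    have h2 : dist (0 : EuclideanSpace ℝ (Fin n)) p₀ = ‖p₀‖ := by
      rw [dist_comm, dist_zero_right]
    rw [dist_zero_right] at h1
    linarith
  have hlow : ENNReal.ofReal 2⁻¹ ^ d * C
      ≤ μH[(d : ℝ)] ((V : Set (EuclideanSpace ℝ (Fin n))) ∩ ball 0 1) := by
    rw [← plane_ball_scale d V hp₀V' hp₀V' (by norm_num : (0:ℝ) < 2⁻¹)]
    exact measure_mono hsub1
  have hup : μH[(d : ℝ)] ((V : Set (EuclideanSpace ℝ (Fin n))) ∩ ball 0 1)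
      ≤ ENNReal.ofReal 2 ^ d * C := by
    rw [← plane_ball_scale d V hp₀V' hp₀V' (by norm_num : (0:ℝ) < 2)]
    exact measure_mono hsub2
  have hB0 : μH[(d : ℝ)] ((V : Set (EuclideanSpace ℝ (Fin n))) ∩ ball 0 1) ≠ 0 := by
    refine (lt_of_lt_of_le ?_ hlow).ne'
    exact ENNReal.mul_pos (pow_ne_zero d (by simp [ENNReal.ofReal_pos])) hC0.ne'
  have hBtop : μH[(d : ℝ)] ((V : Set (EuclideanSpace ℝ (Fin n))) ∩ ball 0 1) ≠ ⊤ := by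
    refine (lt_of_le_of_lt hup ?_).ne
    exact ENNReal.mul_lt_top (ENNReal.pow_lt_top ENNReal.ofReal_lt_top) hCtop
  have hνapply : ∀ s : Set (EuclideanSpace ℝ (Fin n)), MeasurableSet s →
      ν s = (μH[(d : ℝ)] ((V : Set (EuclideanSpace ℝ (Fin n))) ∩ ball 0 1))⁻¹
        * μH[(d : ℝ)] ((V : Set (EuclideanSpace ℝ (Fin n))) ∩ s) := by
    intro s hs
    rw [hν, nuV, Measure.smul_apply, Measure.restrict_apply hs, smul_eq_mul, Set.inter_comm s]
  have hνB01 : ν (ball 0 1) = 1 := by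
    rw [hνapply _ measurableSet_ball]
    exact ENNReal.inv_mul_cancel hB0 hBtop
  -- blowup facts
  have hT : Measurable (fun z : EuclideanSpace ℝ (Fin n) => r⁻¹ • (z - x)) :=
    ((continuous_id.sub continuous_const).const_smul r⁻¹).measurable
  have hx' := hx
  rw [hS, mem_setOf_eq] at hx'
  have hμB0 : μ (ball x r) ≠ 0 := (hx' r hr).ne'
  have hμBtop : μ (ball x r) ≠ ⊤ :=
    ((measure_mono ball_subset_closedBall).trans_lt (isCompact_closedBall x r).measure_lt_top).ne
  have hpre : (fun z : EuclideanSpace ℝ (Fin n) => r⁻¹ • (z - x)) ⁻¹' (ball 0 1) = ball x r := by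
    ext z
    simp only [mem_preimage, mem_ball, dist_eq_norm, sub_zero, norm_smul, norm_inv,
      Real.norm_eq_abs, abs_of_pos hr]
    rw [inv_mul_lt_iff₀ hr, mul_one]
  have hbμB01 : bμ (ball 0 1) = 1 := by
    rw [hbμ, blowup, Measure.smul_apply, Measure.map_apply hT measurableSet_ball, hpre,
      smul_eq_mul, ENNReal.inv_mul_cancel hμB0 hμBtop]
  -- boundedness of the W1 defining set
  have hbdd : BddAbove {a : ℝ | ∃ ψ' : EuclideanSpace ℝ (Fin n) → ℝ,
      LipschitzWith 1 ψ' ∧ (∀ z ∉ ball (0 : EuclideanSpace ℝ (Fin n)) 1, ψ' z = 0) ∧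
      a = |(∫ z, ψ' z ∂bμ) - ∫ z, ψ' z ∂ν|} := by
    refine ⟨4, ?_⟩
    rintro a' ⟨φ, hφlip, hφsupp, rfl⟩
    by_cases htriv : ∀ w : EuclideanSpace ℝ (Fin n), ‖w‖ < 1
    · have hz0 : ∀ w : EuclideanSpace ℝ (Fin n), w = 0 := by
        intro w
        by_contra hw0
        have hnorm : ‖w‖ ≠ 0 := norm_ne_zero_iff.mpr hw0
        have h2 := htriv ((2 / ‖w‖) • w)
        rw [norm_smul, Real.norm_eq_abs, abs_of_pos (by positivity : (0:ℝ) < 2 / ‖w‖),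
          div_mul_cancel₀ _ hnorm] at h2
        linarith
      have huniv : ball (0 : EuclideanSpace ℝ (Fin n)) 1 = univ :=
        eq_univ_of_forall fun w => by
          rw [mem_ball, dist_zero_right]; exact htriv w
      have hφconst : φ = fun _ => φ 0 := funext fun z => by rw [hz0 z]
      have h1 : bμ univ = 1 := by rw [← huniv]; exact hbμB01
      have h2 : ν univ = 1 := by rw [← huniv]; exact hνB01
      rw [hφconst, integral_const, integral_const, measureReal_def, measureReal_def, h1, h2]
      simp
    · push_neg at htriv
      obtain ⟨w₀, hw₀⟩ := htriv
      set u := ‖w₀‖⁻¹ • w₀ with hudef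
      have hw₀0 : ‖w₀‖ ≠ 0 := by intro h; rw [h] at hw₀; linarith
      have hu : ‖u‖ = 1 := by
        rw [hudef, norm_smul, Real.norm_eq_abs, abs_of_pos (by positivity : (0:ℝ) < ‖w₀‖⁻¹),
          inv_mul_cancel₀ hw₀0]
      have hφb : ∀ z, ‖φ z‖ ≤ (ball (0 : EuclideanSpace ℝ (Fin n)) 1).indicator
          (fun _ => (2:ℝ)) z := by
        intro z
        by_cases hz : z ∈ ball (0 : EuclideanSpace ℝ (Fin n)) 1
        · rw [indicator_of_mem hz]
          have hznorm : ‖z‖ < 1 := by rwa [mem_ball, dist_zero_right] at hz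
          have hnu : ‖(2:ℝ) • u‖ = 2 := by
            rw [norm_smul, Real.norm_eq_abs, abs_of_pos (by norm_num : (0:ℝ) < 2), hu, mul_one]
          have hwout : z + (2:ℝ) • u ∉ ball (0 : EuclideanSpace ℝ (Fin n)) 1 := by
            rw [mem_ball, dist_zero_right]
            push_neg
            have h1 : ‖(2:ℝ) • u‖ ≤ ‖z + (2:ℝ) • u‖ + ‖z‖ := by
              have := norm_sub_le (z + (2:ℝ) • u) z
              simpa [add_sub_cancel_left] using this
            rw [hnu] at h1
            linarith
          have h0 : φ (z + (2:ℝ) • u) = 0 := hφsupp _ hwout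
          have hld := hφlip.dist_le_mul z (z + (2:ℝ) • u)
          rw [Real.dist_eq, h0, sub_zero, NNReal.coe_one, one_mul, dist_eq_norm] at hld
          have hd2 : ‖z - (z + (2:ℝ) • u)‖ = 2 := by
            rw [← norm_neg]
            simpa [neg_sub, add_sub_cancel_left] using hnu
          rw [hd2] at hld
          rwa [Real.norm_eq_abs]
        · rw [indicator_of_notMem hz, hφsupp z hz]
          simp
      have hgint : ∀ m : Measure (EuclideanSpace ℝ (Fin n)), m (ball 0 1) = 1 →
          Integrable ((ball (0 : EuclideanSpace ℝ (Fin n)) 1).indicator (fun _ => (2:ℝ))) m := by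
        intro m hm
        rw [integrable_indicator_iff measurableSet_ball]
        refine (integrableOn_const_iff).mpr (Or.inr ?_)
        rw [hm]
        exact ENNReal.one_lt_top
      have key : ∀ m : Measure (EuclideanSpace ℝ (Fin n)), m (ball 0 1) = 1 →
          |∫ z, φ z ∂m| ≤ 2 := by
        intro m hm
        have hint : Integrable φ m :=
          (hgint m hm).mono' hφlip.continuous.aestronglyMeasurable (ae_of_all _ hφb)
        have step1 : |∫ z, φ z ∂m| ≤ ∫ z, ‖φ z‖ ∂m := by
          rw [← Real.norm_eq_abs]
          exact norm_integral_le_integral_norm _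
        have step2 : ∫ z, ‖φ z‖ ∂m ≤ ∫ z, (ball (0 : EuclideanSpace ℝ (Fin n)) 1).indicator
            (fun _ => (2:ℝ)) z ∂m := integral_mono hint.norm (hgint m hm) hφb
        have step3 : ∫ z, (ball (0 : EuclideanSpace ℝ (Fin n)) 1).indicator
            (fun _ => (2:ℝ)) z ∂m = (m (ball 0 1)).toReal • (2:ℝ) :=
          integral_indicator_const _ measurableSet_ball
        rw [step3, hm] at step2
        simp only [ENNReal.toReal_one, one_smul] at step2
        linarith
      have h1 := key bμ hbμB01
      have h2 := key ν hνB01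
      have htri : |(∫ z, φ z ∂bμ) - ∫ z, φ z ∂ν| ≤ |∫ z, φ z ∂bμ| + |∫ z, φ z ∂ν| :=
        abs_sub _ _
      linarith
  -- the integral against the blowup vanishes
  have hIμ : ∫ z, ψ z ∂bμ = 0 := by
    rw [hbμ, blowup, integral_smul_measure,
      integral_map hT.aemeasurable hψcont.aestronglyMeasurable]
    have hsub : {z : EuclideanSpace ℝ (Fin n) | ψ (r⁻¹ • (z - x)) ≠ 0} ⊆ ball y (8 * δ * r) := by
      intro z hz
      have hmem := hψmem _ hz
      rw [mem_ball] at hmem ⊢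
      have heq : r⁻¹ • (z - x) - y' = r⁻¹ • (z - y) := by
        rw [hy'def, ← smul_sub]
        congr 1
        abel
      rw [dist_eq_norm, heq, norm_smul, Real.norm_eq_abs, abs_of_pos (inv_pos.mpr hr)] at hmem
      rw [dist_eq_norm]
      have h1 : ‖z - y‖ < 4 * δ * r := by
        rw [inv_mul_lt_iff₀ hr] at hmem
        nlinarith
      nlinarith
    have hae : ∀ᵐ z ∂μ, ψ (r⁻¹ • (z - x)) = 0 := by
      rw [ae_iff]
      exact measure_mono_null hsub hnull
    rw [integral_eq_zero_of_ae hae, smul_zero]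
  -- the integral against ν is bounded below
  have hballsub2 : ball y' (2 * δ) ⊆ ball (0 : EuclideanSpace ℝ (Fin n)) 1 :=
    subset_trans (ball_subset_ball (by linarith)) hballsub
  have hν2δtop : ν (ball y' (2 * δ)) < ⊤ := by
    refine (measure_mono hballsub2).trans_lt ?_
    rw [hνB01]
    exact ENNReal.one_lt_top
  have hν2δ : ENNReal.ofReal (δ ^ d) ≤ ν (ball y' (2 * δ)) := by
    rw [hνapply _ measurableSet_ball,
      plane_ball_scale d V hp₀V' hy'V (by linarith : (0:ℝ) < 2 * δ)]
    have h2d0 : (ENNReal.ofReal 2 ^ d : ℝ≥0∞) ≠ 0 :=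
      pow_ne_zero d (by simp [ENNReal.ofReal_pos])
    have h2dtop : (ENNReal.ofReal 2 ^ d : ℝ≥0∞) ≠ ⊤ :=
      (ENNReal.pow_lt_top ENNReal.ofReal_lt_top).ne
    have hcalc : (ENNReal.ofReal 2 ^ d * C)⁻¹ * (ENNReal.ofReal (2 * δ) ^ d * C)
        = ENNReal.ofReal (δ ^ d) := by
      rw [ENNReal.mul_inv (Or.inl h2d0) (Or.inl h2dtop)]
      have e1 : (ENNReal.ofReal 2 ^ d)⁻¹ * ENNReal.ofReal (2 * δ) ^ d
          = ENNReal.ofReal (δ ^ d) := by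
        rw [ENNReal.inv_pow, ← mul_pow, ← ENNReal.ofReal_inv_of_pos (by norm_num : (0:ℝ) < 2),
          ← ENNReal.ofReal_mul (by norm_num : (0:ℝ) ≤ 2⁻¹),
          (show (2:ℝ)⁻¹ * (2 * δ) = δ by ring), ENNReal.ofReal_pow hδ0.le]
      calc (ENNReal.ofReal 2 ^ d)⁻¹ * C⁻¹ * (ENNReal.ofReal (2 * δ) ^ d * C)
          = ((ENNReal.ofReal 2 ^ d)⁻¹ * ENNReal.ofReal (2 * δ) ^ d) * (C⁻¹ * C) := by ring
        _ = ENNReal.ofReal (δ ^ d) * 1 := by rw [e1, ENNReal.inv_mul_cancel hC0.ne' hCtop.ne]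
        _ = ENNReal.ofReal (δ ^ d) := mul_one _
    rw [← hcalc]
    exact mul_le_mul_left (ENNReal.inv_le_inv.mpr hup) _
  have hψint : Integrable ψ ν := by
    have hgint : Integrable ((ball (0 : EuclideanSpace ℝ (Fin n)) 1).indicator
        (fun _ => (4 * δ : ℝ))) ν := by
      rw [integrable_indicator_iff measurableSet_ball]
      refine (integrableOn_const_iff).mpr (Or.inr ?_)
      rw [hνB01]
      exact ENNReal.one_lt_top
    refine hgint.mono' hψcont.aestronglyMeasurable (ae_of_all _ ?_)
    intro z
    by_cases hz : z ∈ ball (0 : EuclideanSpace ℝ (Fin n)) 1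
    · rw [indicator_of_mem hz, Real.norm_eq_abs, abs_of_nonneg (hψnonneg z)]
      exact hψle z
    · rw [indicator_of_notMem hz, hψsupp z hz]
      simp
  have hind_int : Integrable ((ball y' (2 * δ)).indicator (fun _ => (2 * δ : ℝ))) ν := by
    rw [integrable_indicator_iff measurableSet_ball]
    exact (integrableOn_const_iff).mpr (Or.inr hν2δtop)
  have hmono : ∀ z, (ball y' (2 * δ)).indicator (fun _ => (2 * δ : ℝ)) z ≤ ψ z := by
    intro z
    by_cases hz : z ∈ ball y' (2 * δ)
    · rw [indicator_of_mem hz]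
      have hdz : dist z y' < 2 * δ := mem_ball.mp hz
      refine le_trans (by linarith : (2 * δ : ℝ) ≤ 4 * δ - dist z y') (le_max_right _ _)
    · rw [indicator_of_notMem hz]
      exact hψnonneg z
  have hIν : 2 * δ ^ (d + 1) ≤ ∫ z, ψ z ∂ν := by
    have h1 : ∫ z, (ball y' (2 * δ)).indicator (fun _ => (2 * δ : ℝ)) z ∂ν ≤ ∫ z, ψ z ∂ν :=
      integral_mono hind_int hψint hmono
    have h2 : ∫ z, (ball y' (2 * δ)).indicator (fun _ => (2 * δ : ℝ)) z ∂ν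
        = (ν (ball y' (2 * δ))).toReal • (2 * δ : ℝ) :=
      integral_indicator_const _ measurableSet_ball
    have h3 : δ ^ d ≤ (ν (ball y' (2 * δ))).toReal := by
      have := ENNReal.toReal_mono hν2δtop.ne hν2δ
      rwa [ENNReal.toReal_ofReal (by positivity)] at this
    have h4 : (2 : ℝ) * δ ^ (d + 1) ≤ (ν (ball y' (2 * δ))).toReal * (2 * δ) := by
      have := mul_le_mul_of_nonneg_right h3 (by linarith : (0:ℝ) ≤ 2 * δ)
      calc (2 : ℝ) * δ ^ (d + 1) = δ ^ d * (2 * δ) := by ring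
        _ ≤ (ν (ball y' (2 * δ))).toReal * (2 * δ) := this
    rw [h2, smul_eq_mul] at h1
    linarith
  -- conclusion
  have hεge : |(∫ z, ψ z ∂bμ) - ∫ z, ψ z ∂ν| ≤ ε := by
    rw [hεdef, W1]
    exact le_csSup hbdd ⟨ψ, hψlip, hψsupp, rfl⟩
  have habs : |(∫ z, ψ z ∂bμ) - ∫ z, ψ z ∂ν| = ∫ z, ψ z ∂ν := by
    rw [hIμ, zero_sub, abs_neg, abs_of_nonneg]
    refine le_trans ?_ hIν
    positivity
  have hfinal1 : 2 * δ ^ (d + 1) ≤ ε := by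
    rw [habs] at hεge
    linarith
  have h2 : a ^ (d + 1) = ε := by
    rw [hadef, ← Real.rpow_natCast (ε ^ ((1:ℝ)/(d+1))) (d+1), ← Real.rpow_mul hε0]
    push_cast
    rw [one_div, inv_mul_cancel₀ (by positivity : ((d:ℝ)+1) ≠ 0), Real.rpow_one]
  have hfinal2 : ε < δ ^ (d + 1) := by
    have h1 : a ^ (d + 1) < δ ^ (d + 1) := by
      apply pow_lt_pow_left₀ hδa hrpow0
      exact Nat.succ_ne_zero d
    linarith [h2 ▸ h1]
  have hδpow : 0 < δ ^ (d + 1) := pow_pos hδ0 _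
  linarith
end
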